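/- Let m, n, w, d, l, v be natural numbers with 1 ≤ w < m, l ∣ n, 1 ≤ v ≤ l, and v ≤ l·w. Then w^(n·v/l) · (m−w)^(n − n·v/l) · A(m, n, w, d) ≤ m^n · A((m−1)·l, n/l, l·w − v, d). -/

import Mathlib

open Finset

/-- Total Hamming distance between two words in `J(m,w)^n`:
the number of positions (among all `m·n` entries) in which they differ. -/
def arrDist {m n : ℕ} (X Y : Fin n → Fin m → ZMod 2) : ℕ :=
  ∑ k, hammingDist (X k) (Y k)

/-- `C` is a constant-weight array code in `J(m,w)^n` with minimum distance `2d`. -/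
def isCWAC (m n w d : ℕ) (C : Finset (Fin n → Fin m → ZMod 2)) : Prop :=
  C.Nonempty ∧ (∀ X ∈ C, ∀ k, hammingNorm (X k) = w) ∧
    ∀ X ∈ C, ∀ Y ∈ C, X ≠ Y → 2 * d ≤ arrDist X Y

/-- Maximum cardinality of a CWAC in `J(m,w)^n` with minimum Hamming distance `2d`. -/
noncomputable def Amax (m n w d : ℕ) : ℕ :=
  sSup { c | ∃ C : Finset (Fin n → Fin m → ZMod 2), isCWAC m n w d C ∧ C.card = c }

/-- Maximum cardinality of an anticode in `J(m,w)^n` with diameter `2δ`. -/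
noncomputable def alphaMax (m n w δ : ℕ) : ℕ :=
  sSup { c | ∃ C : Finset (Fin n → Fin m → ZMod 2), C.Nonempty ∧
    (∀ X ∈ C, ∀ k, hammingNorm (X k) = w) ∧
    (∀ X ∈ C, ∀ Y ∈ C, arrDist X Y ≤ 2 * δ) ∧ C.card = c }

/-- Maximum cardinality of a binary constant-weight code in `J(n,w)` with
minimum Hamming distance `2d`. -/
noncomputable def Bmax (n w d : ℕ) : ℕ :=
  sSup { c | ∃ C : Finset (Fin n → ZMod 2), C.Nonempty ∧
    (∀ x ∈ C, hammingNorm x = w) ∧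
    (∀ x ∈ C, ∀ y ∈ C, x ≠ y → 2 * d ≤ hammingDist x y) ∧ C.card = c }

/-- Maximum cardinality of a nonrestricted `q`-ary code of length `n` with
minimum Hamming distance `d`. -/
noncomputable def Cmax (q n d : ℕ) : ℕ :=
  sSup { c | ∃ C : Finset (Fin n → Fin q), C.Nonempty ∧
    (∀ x ∈ C, ∀ y ∈ C, x ≠ y → d ≤ hammingDist x y) ∧ C.card = c }

/-- `ν(i)`: the number of vectors of weight `u` at Hamming distance `i` from a
fixed vector of weight `w` in `GF(2)^m`. -/
def nuF (m w u : ℕ) (i : ℕ) : ℕ :=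
  if (u + w - i) % 2 = 0 ∧ i ≤ u + w ∧ w ≤ u + i then
    Nat.choose w ((u + w - i) / 2) * Nat.choose (m - w) ((u + i - w) / 2)
  else 0

lemma zmod2_ne_zero_iff : ∀ a : ZMod 2, a ≠ 0 ↔ a = 1 := by decide

lemma countExact {α : Type*} [Fintype α] [DecidableEq α] (l v w z : ℕ)
    (A : Fin l → Finset α) (hw : ∀ k, (A k).card = w) (hz : ∀ k, (A k)ᶜ.card = z) :
    (univ.filter fun g : Fin l → α => (univ.filter fun k => g k ∈ A k).card = v).card
      = l.choose v * (w ^ v * z ^ (l - v)) := by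
  by_cases hv : v ≤ l
  case neg =>
    rw [Nat.choose_eq_zero_of_lt (by omega), Nat.zero_mul]
    rw [Finset.card_eq_zero, Finset.filter_eq_empty_iff]
    intro g _
    have := Finset.card_filter_le (univ : Finset (Fin l)) (fun k => g k ∈ A k)
    simp only [Finset.card_univ, Fintype.card_fin] at this
    omega
  rw [Finset.card_eq_sum_card_fiberwise
    (f := fun g : Fin l → α => univ.filter fun k => g k ∈ A k)
    (t := powersetCard v univ) (by
      intro g hg
      simp only [Finset.mem_coe, mem_filter, mem_univ, true_and] at hg
      exact Finset.mem_powersetCard.2 ⟨Finset.subset_univ _, hg⟩)]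
  have key : ∀ S ∈ powersetCard v (univ : Finset (Fin l)),
      (((univ.filter fun g : Fin l → α => (univ.filter fun k => g k ∈ A k).card = v)).filter
        fun g => (univ.filter fun k => g k ∈ A k) = S).card = w ^ v * z ^ (l - v) := by
    intro S hS
    obtain ⟨-, hScard⟩ := Finset.mem_powersetCard.1 hS
    have hset : (((univ.filter fun g : Fin l → α =>
        (univ.filter fun k => g k ∈ A k).card = v)).filter
        fun g => (univ.filter fun k => g k ∈ A k) = S)
        = Fintype.piFinset (fun k => if k ∈ S then A k else (A k)ᶜ) := by
      ext g
      simp only [Finset.mem_filter, Finset.mem_univ, true_and, Fintype.mem_piFinset]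
      constructor
      · rintro ⟨-, h⟩ k
        by_cases hk : k ∈ S
        · simpa [hk] using (Finset.ext_iff.1 h k).2 hk
        · simp only [hk, if_false, Finset.mem_compl]
          intro hgk
          exact hk ((Finset.ext_iff.1 h k).1 (by simp [hgk]))
      · intro h
        have hfe : (univ.filter fun k => g k ∈ A k) = S := by
          ext k
          simp only [Finset.mem_filter, Finset.mem_univ, true_and]
          have := h k
          by_cases hk : k ∈ S <;> simp [hk] at this ⊢
          · exact this
          · exact this
        exact ⟨hfe ▸ hScard, hfe⟩
    rw [hset, Fintype.card_piFinset]
    have : ∀ k : Fin l, (if k ∈ S then A k else (A k)ᶜ).card = if k ∈ S then w else z := by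
      intro k; by_cases hk : k ∈ S <;> simp [hk, hw, hz]
    rw [Finset.prod_congr rfl (fun k _ => this k)]
    rw [Finset.prod_ite, Finset.prod_const, Finset.prod_const]
    congr 1
    · congr 1
      rw [Finset.filter_mem_eq_inter, Finset.univ_inter, hScard]
    · congr 1
      have : (univ.filter fun k => k ∉ S) = Sᶜ := by ext k; simp
      rw [this, Finset.card_compl, hScard, Fintype.card_fin]
  rw [Finset.sum_congr rfl key, Finset.sum_const, Finset.card_powersetCard,
    Finset.card_univ, Fintype.card_fin, smul_eq_mul]

lemma countBinary (l v : ℕ) :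
    (univ.filter fun τ : Fin l → ZMod 2 => (univ.filter fun k => τ k = 1).card = v).card
      = l.choose v := by
  have := countExact (α := ZMod 2) l v 1 1 (fun _ => {1}) (fun _ => rfl)
    (fun k => show ({1}ᶜ : Finset (ZMod 2)).card = 1 by decide)
  simpa using this

lemma filter_pi_card {n' : ℕ} {γ : Type*} [Fintype γ] [DecidableEq γ]
    (Q : Fin n' → γ → Prop) [∀ b x, Decidable (Q b x)] :
    (univ.filter fun g : Fin n' → γ => ∀ b, Q b (g b)).card
      = ∏ b, (univ.filter (Q b)).card := by
  rw [show (univ.filter fun g : Fin n' → γ => ∀ b, Q b (g b))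
      = Fintype.piFinset (fun b => univ.filter (Q b)) by
    ext g; simp [Fintype.mem_piFinset]]
  exact Fintype.card_piFinset _

lemma norm_succAbove {M : ℕ} (x : Fin (M + 1) → ZMod 2) (j : Fin (M + 1)) :
    hammingNorm x = hammingNorm (fun t => x (j.succAbove t)) + (if x j = 1 then 1 else 0) := by
  unfold hammingNorm
  rw [Finset.card_filter, Finset.card_filter,
    Fin.sum_univ_succAbove (fun i => if x i ≠ 0 then 1 else 0) j]
  simp only [zmod2_ne_zero_iff]
  ring

lemma dist_succAbove {M : ℕ} (x y : Fin (M + 1) → ZMod 2) (j : Fin (M + 1)) (h : x j = y j) :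
    hammingDist x y = hammingDist (fun t => x (j.succAbove t)) (fun t => y (j.succAbove t)) := by
  unfold hammingDist
  rw [Finset.card_filter, Finset.card_filter,
    Fin.sum_univ_succAbove (fun i => if x i ≠ y i then 1 else 0) j]
  simp [h]

/-- regroup rows into blocks -/
def regroup {γ : Type*} {l n' : ℕ} (e : Fin n' × Fin l ≃ Fin (l * n')) :
    (Fin (l * n') → γ) ≃ (Fin n' → Fin l → γ) where
  toFun J b k := J (e (b, k))
  invFun g r := g (e.symm r).1 (e.symm r).2
  left_inv J := by funext r; simp
  right_inv g := by funext b k; simp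

@[simp] lemma regroup_apply {γ : Type*} {l n' : ℕ} (e : Fin n' × Fin l ≃ Fin (l * n'))
    (J : Fin (l * n') → γ) (b : Fin n') (k : Fin l) : regroup e J b k = J (e (b, k)) := rfl

/-- puncture an array word at one column per row -/
def punc {M l n' : ℕ} (e : Fin n' × Fin l ≃ Fin (l * n')) (f : Fin l × Fin M ≃ Fin (M * l))
    (X : Fin (l * n') → Fin (M + 1) → ZMod 2) (J : Fin (l * n') → Fin (M + 1)) :
    Fin n' → Fin (M * l) → ZMod 2 :=
  fun b c => X (e (b, (f.symm c).1)) ((J (e (b, (f.symm c).1))).succAbove (f.symm c).2)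

theorem johnson_bound_CWAC_delta_zero (m n w d l v : ℕ)
    (hw : 1 ≤ w) (hwm : w < m) (hl : l ∣ n) (hv1 : 1 ≤ v) (hvl : v ≤ l)
    (hvlw : v ≤ l * w) :
    w ^ (n * v / l) * (m - w) ^ (n - n * v / l) * Amax m n w d
      ≤ m ^ n * Amax ((m - 1) * l) (n / l) (l * w - v) d := by
  obtain ⟨M, rfl⟩ : ∃ M, m = M + 1 := ⟨m - 1, by omega⟩
  have hl1 : 1 ≤ l := le_trans hv1 hvl
  obtain ⟨n', rfl⟩ := hl
  have hd1 : l * n' / l = n' := Nat.mul_div_cancel_left _ hl1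
  have hd2 : l * n' * v / l = n' * v := by
    rw [Nat.mul_assoc, Nat.mul_div_cancel_left _ hl1]
  rw [hd2, hd1, Nat.add_sub_cancel]
  have hwM : w ≤ M := by omega
  set e : Fin n' × Fin l ≃ Fin (l * n') := finProdFinEquiv.trans (finCongr (Nat.mul_comm n' l)) with he
  set f : Fin l × Fin M ≃ Fin (M * l) := finProdFinEquiv.trans (finCongr (Nat.mul_comm l M)) with hf
  classical
  -- the optimal code C
  obtain ⟨C, hCW, hCcard⟩ : ∃ C, isCWAC (M + 1) (l * n') w d C ∧
      C.card = Amax (M + 1) (l * n') w d := by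
    have hne : {c | ∃ C : Finset (Fin (l * n') → Fin (M + 1) → ZMod 2),
        isCWAC (M + 1) (l * n') w d C ∧ C.card = c}.Nonempty := by
      refine ⟨1, {fun _ j => if j < (⟨w, by omega⟩ : Fin (M + 1)) then 1 else 0},
        ⟨Finset.singleton_nonempty _, ?_, ?_⟩, Finset.card_singleton _⟩
      · intro X hX k
        rw [Finset.mem_singleton] at hX
        subst hX
        unfold hammingNorm
        rw [show (univ.filter fun j : Fin (M + 1) =>
            (if j < (⟨w, by omega⟩ : Fin (M + 1)) then (1 : ZMod 2) else 0) ≠ 0)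
            = Finset.Iio ⟨w, by omega⟩ from by
          ext j; by_cases hj : j < (⟨w, by omega⟩ : Fin (M + 1)) <;> simp [hj]]
        exact Fin.card_Iio _
      · intro X hX Y hY hXY
        rw [Finset.mem_singleton] at hX hY
        exact absurd (hX.trans hY.symm) hXY
    have hbdd : BddAbove {c | ∃ C : Finset (Fin (l * n') → Fin (M + 1) → ZMod 2),
        isCWAC (M + 1) (l * n') w d C ∧ C.card = c} :=
      ⟨Fintype.card (Fin (l * n') → Fin (M + 1) → ZMod 2), by
        rintro c ⟨D, -, rfl⟩; simpa using Finset.card_le_univ D⟩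
    exact Nat.sSup_mem hne hbdd
  obtain ⟨hCne, hCnorm, hCdist⟩ := hCW
  set valid : (Fin (l * n') → Fin (M + 1) → ZMod 2) → (Fin (l * n') → Fin (M + 1)) → Prop :=
    fun X J => ∀ b : Fin n',
      (univ.filter fun k : Fin l => X (e (b, k)) (J (e (b, k))) = 1).card = v with hvalid
  set A' : ℕ := Amax (M * l) n' (l * w - v) d with hA'
  -- Count 1
  have count1 : ∀ X ∈ C, (univ.filter fun J => valid X J).card
      = l.choose v ^ n' * (w ^ (n' * v) * (M + 1 - w) ^ (l * n' - n' * v)) := by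
    intro X hX
    have hb : (univ.filter fun J => valid X J).card
        = (univ.filter fun g : Fin n' → Fin l → Fin (M + 1) =>
            ∀ b, (univ.filter fun k => X (e (b, k)) (g b k) = 1).card = v).card := by
      apply Finset.card_equiv (regroup e)
      intro J
      simp only [mem_filter, mem_univ, true_and, regroup_apply]
      exact Iff.rfl
    rw [hb, filter_pi_card (fun (b : Fin n') (h : Fin l → Fin (M + 1)) => (univ.filter fun k => X (e (b, k)) (h k) = 1).card = v)]
    have hbl : ∀ b : Fin n', ((univ : Finset (Fin l → Fin (M + 1))).filter fun h =>
        (univ.filter fun k => X (e (b, k)) (h k) = 1).card = v).card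
        = l.choose v * (w ^ v * (M + 1 - w) ^ (l - v)) := by
      intro b
      have hcard : ∀ k : Fin l, (univ.filter fun j => X (e (b, k)) j = 1).card = w := by
        intro k
        have hn := hCnorm X hX (e (b, k))
        unfold hammingNorm at hn
        rw [← hn]
        congr 1
        ext j
        simp [zmod2_ne_zero_iff]
      have hcardc : ∀ k : Fin l, ((univ.filter fun j => X (e (b, k)) j = 1))ᶜ.card
          = M + 1 - w := by
        intro k; rw [Finset.card_compl, hcard, Fintype.card_fin]
      have hce := countExact l v w (M + 1 - w)
        (fun k => univ.filter fun j => X (e (b, k)) j = 1) hcard hcardc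
      rw [← hce]
      congr 1
      ext g
      simp
    rw [Finset.prod_congr rfl (fun b _ => hbl b), Finset.prod_const, Finset.card_univ,
      Fintype.card_fin, mul_pow, mul_pow, ← pow_mul, ← pow_mul, Nat.sub_mul,
      Nat.mul_comm v n']
  -- per J bound
  have perJ : ∀ J : Fin (l * n') → Fin (M + 1),
      (C.filter fun X => valid X J).card ≤ l.choose v ^ n' * A' := by
    intro J
    set Sigs := univ.filter (fun σ : Fin (l * n') → ZMod 2 =>
        ∀ b, (univ.filter fun k => σ (e (b, k)) = 1).card = v) with hSig
    have hSigcard : Sigs.card = l.choose v ^ n' := by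
      rw [hSig]
      rw [Finset.card_equiv (regroup e)
        (t := univ.filter fun τ : Fin n' → Fin l → ZMod 2 =>
          ∀ b, (univ.filter fun k => τ b k = 1).card = v)
        (fun σ => by simp only [mem_filter, mem_univ, true_and, regroup_apply]; exact Iff.rfl),
        filter_pi_card (fun (b : Fin n') (τb : Fin l → ZMod 2) => (univ.filter fun k => τb k = 1).card = v)]
      rw [Finset.prod_congr rfl (fun b _ => countBinary l v), Finset.prod_const,
        Finset.card_univ, Fintype.card_fin]
    have hmaps : ∀ X ∈ C.filter (fun X => valid X J), (fun r => X r (J r)) ∈ Sigs := by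
      intro X hX
      rw [Finset.mem_filter] at hX
      rw [hSig, Finset.mem_filter]
      exact ⟨Finset.mem_univ _, hX.2⟩
    rw [Finset.card_eq_sum_card_fiberwise hmaps]
    have fib : ∀ σ ∈ Sigs, ((C.filter fun X => valid X J).filter
        fun X => (fun r => X r (J r)) = σ).card ≤ A' := by
      intro σ hsig
      rw [hSig, Finset.mem_filter] at hsig
      set F := (C.filter fun X => valid X J).filter fun X => (fun r => X r (J r)) = σ with hF
      have hFσ : ∀ X ∈ F, ∀ r, X r (J r) = σ r := by
        intro X hX r
        rw [hF, Finset.mem_filter] at hX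
        exact congrFun hX.2 r
      have hFC : ∀ X ∈ F, X ∈ C := by
        intro X hX
        rw [hF, Finset.mem_filter, Finset.mem_filter] at hX
        exact hX.1.1
      rcases F.eq_empty_or_nonempty with hFe | hFne
      · rw [hFe, Finset.card_empty]; exact Nat.zero_le _
      have hinj : Set.InjOn (fun X => punc e f X J) F := by
        intro X hX Y hY hXY
        simp only at hXY
        funext r j
        rcases eq_or_ne j (J r) with hj | hj
        · rw [hj, hFσ X hX r, hFσ Y hY r]
        · obtain ⟨t, ht⟩ := Fin.exists_succAbove_eq hj
          have key : ∀ Z : Fin (l * n') → Fin (M + 1) → ZMod 2,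
              punc e f Z J (e.symm r).1 (f ((e.symm r).2, t)) = Z r ((J r).succAbove t) := by
            intro Z
            simp [punc]
          rw [← ht, ← key X, ← key Y, hXY]
      have hnorm : ∀ X ∈ F, ∀ b, hammingNorm (punc e f X J b) = l * w - v := by
        intro X hX b
        have hsum : hammingNorm (punc e f X J b)
            = ∑ k : Fin l, hammingNorm
                (fun t => X (e (b, k)) ((J (e (b, k))).succAbove t)) := by
          unfold hammingNorm
          rw [Finset.card_filter, ← Equiv.sum_comp f
            (fun c => if punc e f X J b c ≠ 0 then 1 else 0), Fintype.sum_prod_type]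
          refine Finset.sum_congr rfl fun k _ => ?_
          rw [Finset.card_filter]
          refine Finset.sum_congr rfl fun t _ => ?_
          simp [punc]
        have hrow : ∀ k : Fin l,
            hammingNorm (fun t => X (e (b, k)) ((J (e (b, k))).succAbove t))
              + (if X (e (b, k)) (J (e (b, k))) = 1 then 1 else 0) = w := by
          intro k
          rw [← norm_succAbove]
          exact hCnorm X (hFC X hX) (e (b, k))
        have hfil : (univ.filter fun k : Fin l => X (e (b, k)) (J (e (b, k))) = 1)
            = (univ.filter fun k => σ (e (b, k)) = 1) :=
          Finset.filter_congr fun k _ => by rw [hFσ X hX (e (b, k))]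
        have hv' : ∑ k : Fin l, (if X (e (b, k)) (J (e (b, k))) = 1 then 1 else 0) = v := by
          rw [← Finset.card_filter, hfil]
          exact hsig.2 b
        have htot : ∑ k : Fin l, hammingNorm
            (fun t => X (e (b, k)) ((J (e (b, k))).succAbove t)) + v = l * w := by
          rw [← hv', ← Finset.sum_add_distrib,
            Finset.sum_congr rfl (fun k _ => hrow k), Finset.sum_const,
            Finset.card_univ, Fintype.card_fin, smul_eq_mul]
        omega
      have hdist : ∀ X ∈ F, ∀ Y ∈ F,
          arrDist (punc e f X J) (punc e f Y J) = arrDist X Y := by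
        intro X hX Y hY
        unfold arrDist
        rw [← Equiv.sum_comp e (fun r => hammingDist (X r) (Y r)), Fintype.sum_prod_type]
        refine Finset.sum_congr rfl fun b _ => ?_
        have hag : ∀ k : Fin l, hammingDist (X (e (b, k))) (Y (e (b, k)))
            = hammingDist (fun t => X (e (b, k)) ((J (e (b, k))).succAbove t))
                (fun t => Y (e (b, k)) ((J (e (b, k))).succAbove t)) := fun k =>
          dist_succAbove _ _ _ (by rw [hFσ X hX (e (b, k)), hFσ Y hY (e (b, k))])
        rw [Finset.sum_congr rfl (fun k _ => hag k)]
        unfold hammingDist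
        rw [Finset.card_filter, ← Equiv.sum_comp f
          (fun c => if punc e f X J b c ≠ punc e f Y J b c then 1 else 0),
          Fintype.sum_prod_type]
        refine Finset.sum_congr rfl fun k _ => ?_
        rw [Finset.card_filter]
        refine Finset.sum_congr rfl fun t _ => ?_
        simp [punc]
      set D := F.image (fun X => punc e f X J) with hD
      have hDcard : D.card = F.card := Finset.card_image_of_injOn hinj
      have hDC : isCWAC (M * l) n' (l * w - v) d D := by
        refine ⟨hFne.image _, ?_, ?_⟩
        · intro Y hY b
          rw [hD, Finset.mem_image] at hY
          obtain ⟨X, hX, rfl⟩ := hY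
          exact hnorm X hX b
        · intro Y₁ hY₁ Y₂ hY₂ hne12
          rw [hD, Finset.mem_image] at hY₁ hY₂
          obtain ⟨X₁, hX₁, rfl⟩ := hY₁
          obtain ⟨X₂, hX₂, rfl⟩ := hY₂
          have hX12 : X₁ ≠ X₂ := fun h => hne12 (by rw [h])
          rw [hdist X₁ hX₁ X₂ hX₂]
          exact hCdist X₁ (hFC _ hX₁) X₂ (hFC _ hX₂) hX12
      have hle : D.card ≤ A' := by
        rw [hA']
        apply le_csSup
        · exact ⟨Fintype.card (Fin n' → Fin (M * l) → ZMod 2), by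
            rintro c ⟨E, -, rfl⟩; simpa using Finset.card_le_univ E⟩
        · exact ⟨D, hDC, rfl⟩
      calc F.card = D.card := hDcard.symm
        _ ≤ A' := hle
    calc ∑ σ ∈ Sigs, ((C.filter fun X => valid X J).filter
          fun X => (fun r => X r (J r)) = σ).card
        ≤ ∑ _σ ∈ Sigs, A' := Finset.sum_le_sum fib
      _ = Sigs.card * A' := by rw [Finset.sum_const, smul_eq_mul]
      _ = l.choose v ^ n' * A' := by rw [hSigcard]
  -- double counting
  have swap : ∑ X ∈ C, (univ.filter fun J => valid X J).card
      = ∑ J : Fin (l * n') → Fin (M + 1), (C.filter fun X => valid X J).card := by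
    rw [Finset.sum_congr rfl (fun X _ => Finset.card_filter _ _),
      Finset.sum_congr rfl (fun J (_ : J ∈ univ) => Finset.card_filter (fun X => valid X J) C)]
    exact Finset.sum_comm
  have main : C.card * (l.choose v ^ n' * (w ^ (n' * v) * (M + 1 - w) ^ (l * n' - n' * v)))
      ≤ (M + 1) ^ (l * n') * (l.choose v ^ n' * A') := by
    calc C.card * (l.choose v ^ n' * (w ^ (n' * v) * (M + 1 - w) ^ (l * n' - n' * v)))
        = ∑ X ∈ C, (univ.filter fun J => valid X J).card := by
          rw [Finset.sum_congr rfl count1, Finset.sum_const, smul_eq_mul]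
      _ = ∑ J : Fin (l * n') → Fin (M + 1), (C.filter fun X => valid X J).card := swap
      _ ≤ ∑ _J : Fin (l * n') → Fin (M + 1), l.choose v ^ n' * A' :=
          Finset.sum_le_sum (fun J _ => perJ J)
      _ = (M + 1) ^ (l * n') * (l.choose v ^ n' * A') := by
          rw [Finset.sum_const, smul_eq_mul, Finset.card_univ, Fintype.card_fun,
            Fintype.card_fin, Fintype.card_fin]
  have hchoose : 0 < l.choose v ^ n' := pow_pos (Nat.choose_pos hvl) _
  rw [← hCcard]
  refine Nat.le_of_mul_le_mul_left ?_ hchoose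
  calc l.choose v ^ n' * (w ^ (n' * v) * (M + 1 - w) ^ (l * n' - n' * v) * C.card)
      = C.card * (l.choose v ^ n' * (w ^ (n' * v) * (M + 1 - w) ^ (l * n' - n' * v))) := by ring
    _ ≤ (M + 1) ^ (l * n') * (l.choose v ^ n' * A') := main
    _ = l.choose v ^ n' * ((M + 1) ^ (l * n') * A') := by ring
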